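/- Let B be a unital *-algebra and (A,E) a B-valued *-noncommutative probability space. Suppose y = ux where u is unitary with E(u)=0, x = x* , and u and x are *-free over B. Then for all integers n ≥ 0: E((yy*)^n) = E(u E(x^{2n}) u*) = E(u E((y*y)^n) u*). -/

import Mathlib

open scoped BigOperators

/-- Two subsets `S`, `T` (each containing `B`) are free with respect to `E`:
any alternating product of `E`-centered elements from `S` and `T` has zero
expectation. The label `true` marks elements of `S`, `false` elements of `T`. -/
def FreePair {A : Type*} [Ring A] [StarRing A] [Algebra ℂ A]
    (E : A →ₗ[ℂ] A) (S T : Set A) : Prop :=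
  ∀ l : List (A × Bool), l ≠ [] →
    (∀ p ∈ l, E p.1 = 0 ∧ (p.2 = true → p.1 ∈ S) ∧ (p.2 = false → p.1 ∈ T)) →
    l.Chain' (fun p q => p.2 ≠ q.2) →
    E (l.map Prod.fst).prod = 0

/-- If `y = ux` with `u` unitary, `E(u) = 0`, `x` self-adjoint, and `u`, `x`
*-free over `B`, then `E((yy*)ⁿ) = E(u E(x^{2n}) u*) = E(u E((y*y)ⁿ) u*)`. -/
theorem haar_conjugation_of_even_powers
    {A : Type*} [Ring A] [StarRing A] [Algebra ℂ A] [StarModule ℂ A]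
    (B : StarSubalgebra ℂ A) (E : A →ₗ[ℂ] A)
    (hErange : ∀ a : A, E a ∈ B)
    (hEid : ∀ b ∈ B, E b = b)
    (hEstar : ∀ a : A, E (star a) = star (E a))
    (hEbimod : ∀ a : A, ∀ b₁ ∈ B, ∀ b₂ ∈ B, E (b₁ * a * b₂) = b₁ * E a * b₂)
    (u x y : A)
    (huu : u * star u = 1) (hsuu : star u * u = 1)
    (hEu : E u = 0) (hxsa : star x = x)
    (hfree : FreePair E
      (StarAlgebra.adjoin ℂ (insert u (B : Set A)) : StarSubalgebra ℂ A)
      (StarAlgebra.adjoin ℂ (insert x (B : Set A)) : StarSubalgebra ℂ A))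
    (hy : y = u * x) :
    ∀ n : ℕ,
      E ((y * star y) ^ n) = E (u * E (x ^ (2 * n)) * star u) ∧
      E (u * E (x ^ (2 * n)) * star u) = E (u * E ((star y * y) ^ n) * star u) := by
  intro n
  have hys : star y = x * star u := by rw [hy, star_mul, hxsa]
  -- star y * y = x^2
  have h2 : star y * y = x ^ 2 := by
    rw [hys, hy, mul_assoc, ← mul_assoc (star u), hsuu, one_mul, ← pow_two]
  have h3 : (star y * y) ^ n = x ^ (2 * n) := by rw [h2, ← pow_mul]
  -- (y * star y)^n = u * x^(2n) * star u
  have hconj : ∀ (a : A) (m : ℕ), (u * a * star u) ^ m = u * a ^ m * star u := by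
    intro a m
    induction m with
    | zero => simp [huu]
    | succ k ih =>
      calc (u * a * star u) ^ (k + 1) = (u * a ^ k * star u) * (u * a * star u) := by
            rw [pow_succ, ih]
        _ = u * a ^ k * (star u * u) * a * star u := by simp only [mul_assoc]
        _ = u * a ^ (k + 1) * star u := by rw [hsuu, pow_succ]; simp only [mul_one, mul_assoc]
  have h1 : (y * star y) ^ n = u * x ^ (2 * n) * star u := by
    have : y * star y = u * x ^ 2 * star u := by
      rw [hys, hy, pow_two]; simp only [mul_assoc]
    rw [this, hconj, ← pow_mul]
  -- centered element
  set b : A := E (x ^ (2 * n)) with hb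
  have hbB : b ∈ B := hErange _
  have hc0 : E (x ^ (2 * n) - b) = 0 := by
    rw [map_sub, hb, hEid _ hbB, sub_self]
  have hEsu : E (star u) = 0 := by rw [hEstar, hEu, star_zero]
  -- memberships
  have huS : u ∈ (StarAlgebra.adjoin ℂ (insert u (B : Set A)) : StarSubalgebra ℂ A) :=
    StarAlgebra.subset_adjoin ℂ _ (Set.mem_insert _ _)
  have hsuS : star u ∈ (StarAlgebra.adjoin ℂ (insert u (B : Set A)) : StarSubalgebra ℂ A) :=
    star_mem huS
  have hxT : x ∈ (StarAlgebra.adjoin ℂ (insert x (B : Set A)) : StarSubalgebra ℂ A) :=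
    StarAlgebra.subset_adjoin ℂ _ (Set.mem_insert _ _)
  have hbT : b ∈ (StarAlgebra.adjoin ℂ (insert x (B : Set A)) : StarSubalgebra ℂ A) :=
    StarAlgebra.subset_adjoin ℂ _ (Set.mem_insert_of_mem _ hbB)
  have hcT : x ^ (2 * n) - b ∈ (StarAlgebra.adjoin ℂ (insert x (B : Set A)) : StarSubalgebra ℂ A) :=
    sub_mem (pow_mem hxT _) hbT
  -- freeness gives E(u * c * star u) = 0
  have hzero : E (u * (x ^ (2 * n) - b) * star u) = 0 := by
    have := hfree [(u, true), (x ^ (2 * n) - b, false), (star u, true)]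
      (by simp)
      (by
        intro p hp
        simp only [List.mem_cons, List.not_mem_nil, or_false] at hp
        rcases hp with rfl | rfl | rfl
        · exact ⟨hEu, fun _ => huS, by simp⟩
        · exact ⟨hc0, by simp, fun _ => hcT⟩
        · exact ⟨hEsu, fun _ => hsuS, by simp⟩)
      (by simp [List.Chain', List.isChain_cons_cons])
    simpa [mul_assoc] using this
  have key : E (u * x ^ (2 * n) * star u) = E (u * b * star u) := by
    have h4 : u * (x ^ (2 * n) - b) * star u
        = u * x ^ (2 * n) * star u - u * b * star u := by
      rw [mul_sub, sub_mul]
    rw [h4, map_sub, sub_eq_zero] at hzero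
    exact hzero
  exact ⟨by rw [h1, key], by rw [h3]⟩
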